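/- (Stable homomorphisms out of the trivial module compute Margolis homology.) Let M be an R-module, and regard 𝔽₂ as an R-module via the quotient map R → R/(x) ≅ 𝔽₂. An R-linear map f : 𝔽₂ → M factors through a free R-module if and only if f(1) ∈ x·M. Consequently, the quotient of Hom_R(𝔽₂, M) by the subspace of maps factoring through a free R-module is 𝔽₂-linearly isomorphic to the Margolis homology H(M). -/
import Mathlib


noncomputable section

open Polynomial CategoryTheory

/-- The exterior algebra `R = 𝔽₂[X]/(X²)` on one generator over `𝔽₂`. -/
abbrev ExtR : Type := AdjoinRoot (X ^ 2 : (ZMod 2)[X])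

/-- The class `x` of `X` in `R = 𝔽₂[X]/(X²)`; it satisfies `x² = 0`. -/
abbrev xcl : ExtR := AdjoinRoot.root _

/-- Multiplication by `x`, as a linear endomorphism of an `R`-module `M`. -/
def mulX (M : Type*) [AddCommGroup M] [Module ExtR M] : M →ₗ[ExtR] M :=
  LinearMap.lsmul ExtR M xcl

/-- The Margolis homology `H(M) = ker(x·) / range(x·)` of an `R`-module `M`. -/
abbrev MargH (M : Type*) [AddCommGroup M] [Module ExtR M] : Type _ :=
  LinearMap.ker (mulX M) ⧸
    (LinearMap.range (mulX M)).comap (LinearMap.ker (mulX M)).subtype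

/-- The field `𝔽₂`, regarded as an `R`-module via the quotient map `R → R/(x) ≅ 𝔽₂`. -/
abbrev F2R : Type := ExtR ⧸ Ideal.span {xcl}

/-- The subspace of `Hom_R(𝔽₂, M)` consisting of the maps that factor through
a free `R`-module. -/
def freeFactor (M : Type) [AddCommGroup M] [Module ExtR M] :
    Submodule ExtR (F2R →ₗ[ExtR] M) where
  carrier := {f | ∃ F : ModuleCat ExtR, Module.Free ExtR F ∧
      ∃ (g : F2R →ₗ[ExtR] F) (h : F →ₗ[ExtR] M), h ∘ₗ g = f}
  add_mem' := by
    rintro f₁ f₂ ⟨F₁, hF₁, g₁, h₁, rfl⟩ ⟨F₂, hF₂, g₂, h₂, rfl⟩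
    haveI := hF₁; haveI := hF₂
    refine ⟨ModuleCat.of ExtR (F₁ × F₂), inferInstanceAs (Module.Free ExtR (F₁ × F₂)),
      g₁.prod g₂, h₁.comp (LinearMap.fst _ _ _) + h₂.comp (LinearMap.snd _ _ _), ?_⟩
    apply LinearMap.ext; intro c
    rfl
  zero_mem' :=
    ⟨ModuleCat.of ExtR ExtR, inferInstanceAs (Module.Free ExtR ExtR), 0, 0, by simp⟩
  smul_mem' := by
    rintro r f ⟨F, hF, g, h, rfl⟩
    exact ⟨F, hF, g, r • h, by apply LinearMap.ext; intro c; simp⟩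

lemma xcl_sq : xcl * xcl = 0 := by
  have h := AdjoinRoot.mk_self (f := (X ^ 2 : (ZMod 2)[X]))
  rw [map_pow, AdjoinRoot.mk_X] at h
  calc xcl * xcl = xcl ^ 2 := (sq xcl).symm
    _ = 0 := h

lemma xcl_mul_eq_zero {r : ExtR} (h : xcl * r = 0) : ∃ s : ExtR, r = xcl * s := by
  obtain ⟨p, rfl⟩ := AdjoinRoot.mk_surjective r
  have hx : (xcl : ExtR) = AdjoinRoot.mk _ X := (AdjoinRoot.mk_X).symm
  rw [hx, ← map_mul, AdjoinRoot.mk_eq_zero] at h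
  obtain ⟨t, ht⟩ := h
  have hp : p = X * t := by
    have : X * p = X * (X * t) := by rw [ht]; ring
    exact mul_left_cancel₀ (X_ne_zero) this
  exact ⟨AdjoinRoot.mk _ t, by rw [hp, map_mul, AdjoinRoot.mk_X]⟩

lemma free_ker {F : Type*} [AddCommGroup F] [Module ExtR F] [Module.Free ExtR F]
    {v : F} (hv : xcl • v = 0) : ∃ w : F, v = xcl • w := by
  classical
  let b := Module.Free.chooseBasis ExtR F
  have hc : ∀ i, xcl * b.repr v i = 0 := by
    intro i
    have : b.repr (xcl • v) i = 0 := by rw [hv, map_zero]; rfl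
    rwa [map_smul, Finsupp.smul_apply, smul_eq_mul] at this
  choose s hsi using fun i => xcl_mul_eq_zero (hc i)
  refine ⟨(b.repr v).sum fun i _ => s i • b i, ?_⟩
  rw [Finsupp.smul_sum]
  conv_lhs => rw [← b.linearCombination_repr v, Finsupp.linearCombination_apply]
  exact Finsupp.sum_congr fun i _ => by rw [hsi i, smul_smul]

lemma xcl_smul_one : (xcl • (1 : F2R)) = 0 := by
  show (Ideal.Quotient.mk (Ideal.span {xcl}) (xcl * 1) : F2R) = 0
  rw [mul_one]
  exact Ideal.Quotient.eq_zero_iff_mem.2 (Ideal.subset_span rfl)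

lemma f2r_apply {M : Type*} [AddCommGroup M] [Module ExtR M]
    (f : F2R →ₗ[ExtR] M) (r : ExtR) :
    f (Ideal.Quotient.mk _ r) = r • f 1 := by
  have : (Ideal.Quotient.mk (Ideal.span {xcl}) r) = r • (1 : F2R) := by
    show _ = Ideal.Quotient.mk _ (r * 1)
    rw [mul_one]
  rw [this, map_smul]

/-- The map `F2R → M` sending `1` to an element `m` killed by `x`. -/
def toF2Hom (M : Type*) [AddCommGroup M] [Module ExtR M] (m : M) (hm : xcl • m = 0) :
    F2R →ₗ[ExtR] M :=
  Submodule.liftQ (Ideal.span {xcl}) (LinearMap.toSpanSingleton ExtR M m) <| by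
    rw [Ideal.span_le]
    rintro y rfl
    simpa [LinearMap.toSpanSingleton] using hm

lemma toF2Hom_one (M : Type*) [AddCommGroup M] [Module ExtR M] (m : M)
    (hm : xcl • m = 0) : toF2Hom M m hm 1 = m := by
  show LinearMap.toSpanSingleton ExtR M m 1 = m
  simp

/-- Stable homomorphisms out of the trivial module compute Margolis homology:
an `R`-linear map `f : 𝔽₂ → M` factors through a free `R`-module iff `f 1 ∈ x·M`,
and consequently the quotient of `Hom_R(𝔽₂, M)` by the maps factoring through a
free module is isomorphic (additively, equivalently `𝔽₂`-linearly) to `H(M)`. -/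
theorem stable_homs_compute_margolis (M : Type) [AddCommGroup M] [Module ExtR M] :
    (∀ f : F2R →ₗ[ExtR] M,
      f ∈ freeFactor M ↔ f 1 ∈ LinearMap.range (mulX M)) ∧
    Nonempty (((F2R →ₗ[ExtR] M) ⧸ freeFactor M) ≃+ MargH M) := by
  have key : ∀ f : F2R →ₗ[ExtR] M,
      f ∈ freeFactor M ↔ f 1 ∈ LinearMap.range (mulX M) := by
    intro f
    constructor
    · rintro ⟨F, hF, g, h, rfl⟩
      haveI := hF
      have hg : xcl • g 1 = 0 := by rw [← map_smul, xcl_smul_one, map_zero]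
      obtain ⟨w, hw⟩ := free_ker hg
      refine ⟨h w, ?_⟩
      show xcl • h w = (h ∘ₗ g) 1
      rw [LinearMap.comp_apply, hw, map_smul]
    · rintro ⟨m, hm⟩
      have hxx : xcl • (xcl : ExtR) = 0 := by rw [smul_eq_mul, xcl_sq]
      have hcomp : (LinearMap.toSpanSingleton ExtR M m) ∘ₗ (toF2Hom ExtR xcl hxx) = f := by
        apply LinearMap.ext
        intro c
        obtain ⟨r, rfl⟩ := Ideal.Quotient.mk_surjective c
        have h1 : toF2Hom ExtR xcl hxx (Ideal.Quotient.mk _ r) = r • xcl := by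
          rw [f2r_apply, toF2Hom_one]
        rw [LinearMap.comp_apply, h1, map_smul, f2r_apply, ← hm]
        show r • (xcl • m) = r • (xcl • m)
        rfl
      exact ⟨ModuleCat.of ExtR ExtR, inferInstanceAs (Module.Free ExtR ExtR),
        toF2Hom ExtR xcl hxx, LinearMap.toSpanSingleton ExtR M m, hcomp⟩
  have hev : ∀ f : F2R →ₗ[ExtR] M, f 1 ∈ LinearMap.ker (mulX M) := by
    intro f
    show xcl • f 1 = 0
    rw [← map_smul, xcl_smul_one, map_zero]
  let e0 : (F2R →ₗ[ExtR] M) →ₗ[ExtR] LinearMap.ker (mulX M) :=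
    (LinearMap.applyₗ (1 : F2R)).codRestrict _ hev
  have hbij : Function.Bijective e0 := by
    constructor
    · intro f g hfg
      have h1 : f 1 = g 1 := congrArg Subtype.val hfg
      apply LinearMap.ext
      intro c
      obtain ⟨r, rfl⟩ := Ideal.Quotient.mk_surjective c
      rw [f2r_apply, f2r_apply, h1]
    · rintro ⟨m, hm⟩
      have hm' : xcl • m = 0 := hm
      exact ⟨toF2Hom M m hm', Subtype.ext (toF2Hom_one M m hm')⟩
  let e := LinearEquiv.ofBijective e0 hbij
  have he : ∀ f : F2R →ₗ[ExtR] M, (e f : M) = f 1 := fun _ => rfl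
  have hmap : (freeFactor M).map
        (e : (F2R →ₗ[ExtR] M) →ₗ[ExtR] LinearMap.ker (mulX M)) =
      (LinearMap.range (mulX M)).comap (LinearMap.ker (mulX M)).subtype := by
    ext v
    constructor
    · rintro ⟨f, hf, rfl⟩
      show (e f : M) ∈ LinearMap.range (mulX M)
      rw [he f]
      exact (key f).1 hf
    · intro hv
      have hv' : (v : M) ∈ LinearMap.range (mulX M) := hv
      refine ⟨e.symm v, (key (e.symm v)).2 ?_, e.apply_symm_apply v⟩
      have h1 : (e.symm v : F2R →ₗ[ExtR] M) 1 = (v : M) := by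
        have := he (e.symm v)
        rw [e.apply_symm_apply] at this
        exact this.symm
      rw [h1]
      exact hv'
  exact ⟨key, ⟨(Submodule.Quotient.equiv (freeFactor M) _ e hmap).toAddEquiv⟩⟩
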